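/- Let M, n be integers with 1 ≤ n ≤ M, let c > 0, and set ϖ₃ = M!/((n−1)!(M−n)!). Define S(ρ) = ϖ₃ · Σ_{j=0}^{n−1} C(n−1, j)·(−1)^j·e^{−(M−n+j+1)c/ρ}/(M−n+j+1). Then lim_{ρ→∞} ρ^n·(1 − S(ρ)) = ϖ₃·c^n/n. In particular 1 − S(ρ) decays exactly like ρ^{−n} as ρ → ∞. -/

import Mathlib

open Filter intervalIntegral

lemma prodfact (p : ℕ) : ∀ q : ℕ, (∏ j ∈ Finset.range (q+1), (p+1+j)) * p.factorial = (p+q+1).factorial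
  | 0 => by simp [Nat.factorial_succ, Nat.mul_comm]
  | (k+1) => by
      rw [Finset.prod_range_succ, Nat.mul_comm _ (p+1+(k+1)), Nat.mul_assoc, prodfact p k]
      rw [show p + (k+1) + 1 = (p + k + 1) + 1 by ring, Nat.factorial_succ]
      congr 1
      omega

lemma lemB (p q : ℕ) (y : ℝ) :
    ∫ x in (0:ℝ)..y, x ^ p * (1 - x) ^ q
      = ∑ j ∈ Finset.range (q + 1),
          (q.choose j : ℝ) * (-1) ^ j * y ^ (p + j + 1) / (p + j + 1) := by
  have h : ∀ x : ℝ, x ^ p * (1 - x) ^ q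
      = ∑ j ∈ Finset.range (q + 1), (q.choose j : ℝ) * (-1) ^ j * x ^ (p + j) := by
    intro x
    rw [sub_eq_neg_add, add_pow]
    rw [Finset.mul_sum]
    refine Finset.sum_congr rfl fun j hj => ?_
    rw [neg_pow]
    ring
  simp_rw [h]
  rw [intervalIntegral.integral_finset_sum]
  · refine Finset.sum_congr rfl fun j hj => ?_
    rw [intervalIntegral.integral_const_mul, integral_pow]
    push_cast
    ring
  · intro j hj
    exact (intervalIntegral.intervalIntegrable_pow _).const_mul _

lemma lemA (p q : ℕ) :
    ∫ x in (0:ℝ)..1, x ^ p * (1 - x) ^ q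
      = (p.factorial : ℝ) * q.factorial / (p + q + 1).factorial := by
  have h1 : Complex.betaIntegral (p + 1) (q + 1)
      = ((q.factorial : ℂ)) / ∏ j ∈ Finset.range (q + 1), ((p : ℂ) + 1 + j) := by
    apply Complex.betaIntegral_eval_nat_add_one_right
    simp
    positivity
  have hprod : ∏ j ∈ Finset.range (q + 1), ((p : ℂ) + 1 + j)
      = ((p + q + 1).factorial : ℂ) / (p.factorial : ℂ) := by
    rw [eq_div_iff (by exact_mod_cast (Nat.factorial_pos p).ne')]
    have h0 : ∏ j ∈ Finset.range (q + 1), ((p : ℂ) + 1 + j)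
        = ((∏ j ∈ Finset.range (q + 1), (p + 1 + j) : ℕ) : ℂ) := by
      push_cast; ring_nf
    rw [h0, ← Nat.cast_mul, prodfact p q]
  have h2 : Complex.betaIntegral (p + 1) (q + 1)
      = ((∫ x in (0:ℝ)..1, x ^ p * (1 - x) ^ q : ℝ) : ℂ) := by
    rw [Complex.betaIntegral]
    rw [← intervalIntegral.integral_ofReal]
    refine intervalIntegral.integral_congr fun x hx => ?_
    have e1 : (p:ℂ) + 1 - 1 = (p : ℂ) := by ring
    have e2 : (q:ℂ) + 1 - 1 = (q : ℂ) := by ring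
    rw [e1, e2, Complex.cpow_natCast, Complex.cpow_natCast]
    push_cast
    ring
  have h3 : ((∫ x in (0:ℝ)..1, x ^ p * (1 - x) ^ q : ℝ) : ℂ)
      = (((p.factorial : ℝ) * q.factorial / (p + q + 1).factorial : ℝ) : ℂ) := by
    rw [← h2, h1, hprod]
    push_cast
    have hp : (p.factorial : ℂ) ≠ 0 := by exact_mod_cast (Nat.factorial_pos p).ne'
    have hM : ((p + q + 1).factorial : ℂ) ≠ 0 := by exact_mod_cast (Nat.factorial_pos _).ne'
    field_simp
  exact_mod_cast h3

lemma key_lim (c : ℝ) (hc : 0 < c) :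
    Tendsto (fun ρ : ℝ => ρ * (1 - Real.exp (-c / ρ))) atTop (nhds c) := by
  have hd : Tendsto (slope Real.exp 0) (nhdsWithin 0 {(0:ℝ)}ᶜ) (nhds 1) := by
    have := (Real.hasDerivAt_exp 0)
    rw [hasDerivAt_iff_tendsto_slope] at this
    simpa using this
  have hz : Tendsto (fun ρ : ℝ => -c / ρ) atTop (nhdsWithin 0 {(0:ℝ)}ᶜ) := by
    apply tendsto_nhdsWithin_of_tendsto_nhds_of_eventually_within
    · simpa using tendsto_const_nhds.div_atTop (f := fun _ : ℝ => -c) tendsto_id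
    · filter_upwards [eventually_gt_atTop 0] with ρ hρ
      simp only [Set.mem_compl_iff, Set.mem_singleton_iff]
      exact div_ne_zero (neg_ne_zero.mpr hc.ne') hρ.ne'
  have hcomp := hd.comp hz
  have h2 : Tendsto (fun ρ : ℝ => c * slope Real.exp 0 (-c / ρ)) atTop (nhds (c * 1)) :=
    (tendsto_const_nhds).mul hcomp
  rw [mul_one] at h2
  refine h2.congr' ?_
  filter_upwards [eventually_gt_atTop 0] with ρ hρ
  have hne : -c / ρ ≠ 0 := div_ne_zero (neg_ne_zero.mpr hc.ne') hρ.ne'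
  rw [slope_def_field]
  field_simp [hc.ne']
  rw [Real.exp_zero]
  ring

lemma exp_to_one (c : ℝ) : Tendsto (fun ρ : ℝ => Real.exp (-c / ρ)) atTop (nhds 1) := by
  have hz : Tendsto (fun ρ : ℝ => -c / ρ) atTop (nhds 0) := by
    simpa using tendsto_const_nhds.div_atTop (f := fun _ : ℝ => -c) tendsto_id
  simpa [Function.comp_def] using (Real.continuous_exp.tendsto 0).comp hz

/-- Let `1 ≤ n ≤ M`, `c > 0`, `ϖ₃ = M!/((n−1)!(M−n)!)` and
`S(ρ) = ϖ₃ Σ_{j=0}^{n−1} C(n−1,j)(−1)^j e^{−(M−n+j+1)c/ρ}/(M−n+j+1)`.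
Then `ρ^n (1 − S(ρ)) → ϖ₃ c^n/n` as `ρ → ∞`, i.e. `1 − S(ρ)` decays like `ρ^{−n}`. -/
theorem order_stat_tail_high_snr (M n : ℕ) (hn : 1 ≤ n) (hnM : n ≤ M) (c : ℝ) (hc : 0 < c) :
    Tendsto (fun ρ : ℝ =>
        ρ ^ n * (1 -
          ((M.factorial : ℝ) / (((n - 1).factorial : ℝ) * ((M - n).factorial : ℝ))) *
            ∑ j ∈ Finset.range n,
              ((n - 1).choose j : ℝ) * (-1) ^ j *
                Real.exp (-(((M : ℝ) - n + j + 1) * c) / ρ) / ((M : ℝ) - n + j + 1)))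
      atTop
      (nhds (((M.factorial : ℝ) / (((n - 1).factorial : ℝ) * ((M - n).factorial : ℝ))) *
        c ^ n / n)) := by
  set p := M - n with hp
  set q := n - 1 with hq
  have hn1 : n = q + 1 := by omega
  have hM : M = p + q + 1 := by omega
  set ϖ : ℝ := (M.factorial : ℝ) / ((q.factorial : ℝ) * (p.factorial : ℝ)) with hϖ
  have hϖpos : 0 < ϖ := by
    apply div_pos
    · exact_mod_cast Nat.factorial_pos M
    · exact mul_pos (by exact_mod_cast Nat.factorial_pos q) (by exact_mod_cast Nat.factorial_pos p)
  have hϖA : ϖ * ∫ x in (0:ℝ)..1, x ^ p * (1 - x) ^ q = 1 := by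
    rw [lemA, hϖ, hM]
    have h1 : ((p + q + 1).factorial : ℝ) ≠ 0 := by exact_mod_cast (Nat.factorial_pos _).ne'
    have h2 : (q.factorial : ℝ) ≠ 0 := by exact_mod_cast (Nat.factorial_pos _).ne'
    have h3 : (p.factorial : ℝ) ≠ 0 := by exact_mod_cast (Nat.factorial_pos _).ne'
    field_simp
  have hMn : (M : ℝ) - n = (p : ℝ) := by
    rw [hp]
    push_cast [Nat.cast_sub hnM]
    ring
  -- the integrand is continuous
  have hcont : ∀ a b : ℝ, IntervalIntegrable (fun x : ℝ => x ^ p * (1 - x) ^ q) MeasureTheory.volume a b := by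
    intro a b
    exact ((continuous_pow p).mul ((continuous_const.sub continuous_id).pow q)).intervalIntegrable a b
  -- rewrite the function eventually
  have heq : ∀ᶠ ρ in atTop, ρ ^ n * (1 - ϖ *
            ∑ j ∈ Finset.range n,
              (q.choose j : ℝ) * (-1) ^ j *
                Real.exp (-(((M : ℝ) - n + j + 1) * c) / ρ) / ((M : ℝ) - n + j + 1))
      = ρ ^ n * (ϖ * ∫ x in (Real.exp (-c / ρ))..1, x ^ p * (1 - x) ^ q) := by
    filter_upwards [eventually_gt_atTop 0] with ρ hρ
    set y := Real.exp (-c / ρ) with hy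
    have hrange : Finset.range n = Finset.range (q + 1) := by rw [hn1]
    have hsum : ∑ j ∈ Finset.range n,
        (q.choose j : ℝ) * (-1) ^ j *
          Real.exp (-(((M : ℝ) - n + j + 1) * c) / ρ) / ((M : ℝ) - n + j + 1)
        = ∫ x in (0:ℝ)..y, x ^ p * (1 - x) ^ q := by
      rw [lemB, hrange]
      refine Finset.sum_congr rfl fun j hj => ?_
      rw [hMn]
      have hexp : y ^ (p + j + 1) = Real.exp (-(((p : ℝ) + j + 1) * c) / ρ) := by
        rw [hy, ← Real.exp_nat_mul]
        congr 1
        push_cast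
        ring
      rw [hexp]
    have hsplit : (∫ x in (0:ℝ)..y, x ^ p * (1 - x) ^ q)
        + (∫ x in y..(1:ℝ), x ^ p * (1 - x) ^ q)
        = ∫ x in (0:ℝ)..1, x ^ p * (1 - x) ^ q :=
      intervalIntegral.integral_add_adjacent_intervals (hcont 0 y) (hcont y 1)
    have h' := hϖA
    rw [← hsplit, mul_add] at h'
    have hgoal : 1 - ϖ * ∫ x in (0:ℝ)..y, x ^ p * (1 - x) ^ q
        = ϖ * ∫ x in y..(1:ℝ), x ^ p * (1 - x) ^ q := by linarith
    rw [hsum, hgoal]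
  -- bounds
  have hbound : ∀ᶠ ρ in atTop,
      ϖ * Real.exp (-c / ρ) ^ p * (ρ * (1 - Real.exp (-c / ρ))) ^ n / n
        ≤ ρ ^ n * (ϖ * ∫ x in (Real.exp (-c / ρ))..1, x ^ p * (1 - x) ^ q)
      ∧ ρ ^ n * (ϖ * ∫ x in (Real.exp (-c / ρ))..1, x ^ p * (1 - x) ^ q)
        ≤ ϖ * (ρ * (1 - Real.exp (-c / ρ))) ^ n / n := by
    filter_upwards [eventually_gt_atTop 0] with ρ hρ
    set y := Real.exp (-c / ρ) with hy
    have hy0 : 0 < y := Real.exp_pos _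
    have hy1 : y < 1 := by
      rw [hy, Real.exp_lt_one_iff]
      exact div_neg_of_neg_of_pos (neg_neg_of_pos hc) hρ
    have hJ : (∫ x in y..(1:ℝ), (1 - x) ^ q) = (1 - y) ^ (q + 1) / (q + 1) := by
      have h := intervalIntegral.integral_comp_sub_left (a := y) (b := (1:ℝ))
        (fun u : ℝ => u ^ q) 1
      simp only [sub_self] at h
      rw [h, integral_pow]
      norm_num
    have hcont2 : ∀ a b : ℝ, IntervalIntegrable (fun x : ℝ => (1 - x) ^ q) MeasureTheory.volume a b := by
      intro a b
      exact ((continuous_const.sub continuous_id).pow q).intervalIntegrable a b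
    have hcont3 : ∀ a b : ℝ, IntervalIntegrable (fun x : ℝ => y ^ p * (1 - x) ^ q) MeasureTheory.volume a b := by
      intro a b
      exact (hcont2 a b).const_mul _
    have hupper : (∫ x in y..(1:ℝ), x ^ p * (1 - x) ^ q) ≤ (1 - y) ^ (q + 1) / (q + 1) := by
      rw [← hJ]
      apply intervalIntegral.integral_mono_on hy1.le (hcont y 1) (hcont2 y 1)
      intro x hx
      have hx0 : 0 ≤ x := le_trans hy0.le hx.1
      have hx1 : x ≤ 1 := hx.2
      have h1x : (0:ℝ) ≤ 1 - x := by linarith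
      calc x ^ p * (1 - x) ^ q ≤ 1 * (1 - x) ^ q := by
            apply mul_le_mul_of_nonneg_right _ (pow_nonneg h1x q)
            exact pow_le_one₀ hx0 hx1
        _ = (1 - x) ^ q := one_mul _
    have hlower : y ^ p * ((1 - y) ^ (q + 1) / (q + 1)) ≤ ∫ x in y..(1:ℝ), x ^ p * (1 - x) ^ q := by
      have h : y ^ p * ((1 - y) ^ (q + 1) / (q + 1)) = ∫ x in y..(1:ℝ), y ^ p * (1 - x) ^ q := by
        rw [intervalIntegral.integral_const_mul, hJ]
      rw [h]
      apply intervalIntegral.integral_mono_on hy1.le (hcont3 y 1) (hcont y 1)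
      intro x hx
      have h1x : (0:ℝ) ≤ 1 - x := by linarith [hx.2]
      exact mul_le_mul_of_nonneg_right (pow_le_pow_left₀ hy0.le hx.1 p) (pow_nonneg h1x q)
    have hρn : (0:ℝ) < ρ ^ n := pow_pos hρ n
    have hna : ((n:ℝ)) = (q:ℝ) + 1 := by rw [hn1]; push_cast; ring
    have hpowmul : ρ ^ n * ((1 - y) ^ (q+1)) = (ρ * (1 - y)) ^ n := by
      rw [hn1, mul_pow]
    constructor
    · calc ϖ * y ^ p * (ρ * (1 - y)) ^ n / n
          = ρ ^ n * (ϖ * (y ^ p * ((1 - y) ^ (q + 1) / (q + 1)))) := by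
            rw [← hpowmul, hna]; ring
        _ ≤ ρ ^ n * (ϖ * ∫ x in y..(1:ℝ), x ^ p * (1 - x) ^ q) := by
            apply mul_le_mul_of_nonneg_left _ hρn.le
            exact mul_le_mul_of_nonneg_left hlower hϖpos.le
    · calc ρ ^ n * (ϖ * ∫ x in y..(1:ℝ), x ^ p * (1 - x) ^ q)
          ≤ ρ ^ n * (ϖ * ((1 - y) ^ (q + 1) / (q + 1))) := by
            apply mul_le_mul_of_nonneg_left _ hρn.le
            exact mul_le_mul_of_nonneg_left hupper hϖpos.le
        _ = ϖ * (ρ * (1 - y)) ^ n / n := by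
            rw [← hpowmul, hna]; ring
  -- limits of the bounding functions
  have hlim1 : Tendsto (fun ρ : ℝ => ϖ * Real.exp (-c / ρ) ^ p * (ρ * (1 - Real.exp (-c / ρ))) ^ n / n)
      atTop (nhds (ϖ * c ^ n / n)) := by
    have h1 : Tendsto (fun ρ : ℝ => Real.exp (-c / ρ) ^ p) atTop (nhds 1) := by
      simpa using (exp_to_one c).pow p
    have h2 : Tendsto (fun ρ : ℝ => (ρ * (1 - Real.exp (-c / ρ))) ^ n) atTop (nhds (c ^ n)) :=
      (key_lim c hc).pow n
    have h3 := (((tendsto_const_nhds (x := ϖ)).mul h1).mul h2).div_const (n : ℝ)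
    simpa using h3
  have hlim2 : Tendsto (fun ρ : ℝ => ϖ * (ρ * (1 - Real.exp (-c / ρ))) ^ n / n)
      atTop (nhds (ϖ * c ^ n / n)) := by
    have h2 : Tendsto (fun ρ : ℝ => (ρ * (1 - Real.exp (-c / ρ))) ^ n) atTop (nhds (c ^ n)) :=
      (key_lim c hc).pow n
    exact ((tendsto_const_nhds (x := ϖ)).mul h2).div_const (n : ℝ)
  apply tendsto_of_tendsto_of_tendsto_of_le_of_le' hlim1 hlim2
  · filter_upwards [heq, hbound] with ρ h1 h2
    rw [h1]
    exact h2.1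
  · filter_upwards [heq, hbound] with ρ h1 h2
    rw [h1]
    exact h2.2
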